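/- Let F : ℝ^p → ℝ be bounded below by F_lb with locally Lipschitz continuous gradient. Let x_{k+1} = x_k − M_k ∇F(x_k) with each M_k symmetric positive definite. Define χ_k(R) = 1 if ‖x_j‖ ≤ R for all j ≤ k, and 0 otherwise. Then for every R ≥ 0 there exists C_R > 0 such that for all k: [F(x_{k+1}) − F_lb] χ_{k+1}(R) ≤ [F(x_k) − F_lb − ∇F(x_k)ᵀ M_k ∇F(x_k) + C_R ‖M_k ∇F(x_k)‖²] χ_k(R). -/

import Mathlib

open scoped Classical

/-- Indicator: `1` if all iterates up to time `k` stay in the closed ball of radius `R`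
around the origin, `0` otherwise. -/
noncomputable def chi {p : ℕ} (x : ℕ → EuclideanSpace ℝ (Fin p)) (k : ℕ) (R : ℝ) : ℝ :=
  if ∀ j ≤ k, ‖x j‖ ≤ R then 1 else 0

set_option maxHeartbeats 1000000 in
/-- Recursion for the optimality gap: if `F` is bounded below with locally Lipschitz
gradient and `x_{k+1} = x_k − M_k ∇F(x_k)` with `M_k` symmetric positive definite, then
for every `R ≥ 0` there is `C_R > 0` with
`[F(x_{k+1}) − F_lb] χ_{k+1}(R) ≤ [F(x_k) − F_lb − ⟨∇F(x_k), M_k ∇F(x_k)⟩ + C_R ‖M_k ∇F(x_k)‖²] χ_k(R)`. -/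
theorem optimality_gap_recursion {p : ℕ}
    (F : EuclideanSpace ℝ (Fin p) → ℝ) (F_lb : ℝ)
    (hbd : ∀ x, F_lb ≤ F x)
    (hdiff : Differentiable ℝ F)
    (hlip : ∀ K : Set (EuclideanSpace ℝ (Fin p)), IsCompact K →
      ∃ L : ℝ, 0 ≤ L ∧ ∀ x ∈ K, ∀ y ∈ K, ‖gradient F x - gradient F y‖ ≤ L * ‖x - y‖)
    (M : ℕ → Matrix (Fin p) (Fin p) ℝ)
    (hM : ∀ k, (M k).PosDef)
    (x : ℕ → EuclideanSpace ℝ (Fin p))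
    (hx : ∀ k, x (k + 1) = x k - (M k).toEuclideanLin (gradient F (x k))) :
    ∀ R : ℝ, 0 ≤ R → ∃ C : ℝ, 0 < C ∧ ∀ k : ℕ,
      (F (x (k + 1)) - F_lb) * chi x (k + 1) R ≤
        (F (x k) - F_lb
          - inner ℝ (gradient F (x k)) ((M k).toEuclideanLin (gradient F (x k)))
          + C * ‖(M k).toEuclideanLin (gradient F (x k))‖ ^ 2) * chi x k R := by
  intro R hR
  obtain ⟨L, hL0, hLip⟩ := hlip (Metric.closedBall 0 (R + 1))
    (isCompact_closedBall 0 (R + 1))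
  set G : ℝ := L * R + ‖gradient F 0‖ with hGdef
  have hG0 : 0 ≤ G := by positivity
  refine ⟨L + G + 1, by positivity, fun k => ?_⟩
  set g : EuclideanSpace ℝ (Fin p) := gradient F (x k) with hg
  set d : EuclideanSpace ℝ (Fin p) := (M k).toEuclideanLin g with hd
  have hxk1 : x (k + 1) = x k - d := hx k
  -- descent lemma on the ball of radius R+1
  have descent : ∀ a b : EuclideanSpace ℝ (Fin p), ‖a‖ ≤ R + 1 → ‖b‖ ≤ R + 1 →
      F b ≤ F a + inner ℝ (gradient F a) (b - a) + L * ‖b - a‖ ^ 2 := by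
    intro a b ha hb
    have haB : a ∈ Metric.closedBall (0 : EuclideanSpace ℝ (Fin p)) (R + 1) := by
      simpa [Metric.mem_closedBall, dist_eq_norm] using ha
    have hbB : b ∈ Metric.closedBall (0 : EuclideanSpace ℝ (Fin p)) (R + 1) := by
      simpa [Metric.mem_closedBall, dist_eq_norm] using hb
    have hsegB : segment ℝ a b ⊆ Metric.closedBall 0 (R + 1) :=
      (convex_closedBall _ _).segment_subset haB hbB
    have key := Convex.norm_image_sub_le_of_norm_fderiv_le'
      (f := F) (φ := fderiv ℝ F a)
      (C := L * ‖b - a‖) (s := segment ℝ a b)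
      (fun z _ => hdiff z)
      (fun z hz => by
        have h1 : ‖gradient F z - gradient F a‖ ≤ L * ‖z - a‖ :=
          hLip z (hsegB hz) a haB
        have h2 : ‖fderiv ℝ F z - fderiv ℝ F a‖ = ‖gradient F z - gradient F a‖ := by
          rw [gradient, gradient, ← map_sub]
          exact (LinearIsometryEquiv.norm_map _ _).symm
        have h3 : ‖z - a‖ ≤ ‖b - a‖ := by
          have h5 := dist_add_dist_of_mem_segment hz
          have h4 : dist a z ≤ dist a b := by
            have : (0 : ℝ) ≤ dist z b := dist_nonneg
            linarith
          simpa [dist_eq_norm, norm_sub_rev] using h4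
        calc ‖fderiv ℝ F z - fderiv ℝ F a‖ = ‖gradient F z - gradient F a‖ := h2
          _ ≤ L * ‖z - a‖ := h1
          _ ≤ L * ‖b - a‖ := by nlinarith [norm_nonneg (z - a), norm_nonneg (b - a)])
      (convex_segment a b) (left_mem_segment ℝ a b) (right_mem_segment ℝ a b)
    have happ : (fderiv ℝ F a) (b - a) = inner ℝ (gradient F a) (b - a) := by
      have h5 : fderiv ℝ F a = (InnerProductSpace.toDual ℝ _) (gradient F a) :=
        ((InnerProductSpace.toDual ℝ _).apply_symm_apply _).symm
      rw [h5, InnerProductSpace.toDual_apply_apply]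
    rw [happ, Real.norm_eq_abs] at key
    have h6 := abs_le.1 key
    have h7 : L * ‖b - a‖ * ‖b - a‖ = L * ‖b - a‖ ^ 2 := by ring
    linarith
  by_cases h1 : ∀ j ≤ k + 1, ‖x j‖ ≤ R
  · have h2 : ∀ j ≤ k, ‖x j‖ ≤ R := fun j hj => h1 j (hj.trans (Nat.le_succ k))
    have hc1 : chi x (k + 1) R = 1 := if_pos h1
    have hc2 : chi x k R = 1 := if_pos h2
    rw [hc1, hc2, mul_one, mul_one]
    have hxa : ‖x k‖ ≤ R + 1 := (h2 k le_rfl).trans (by linarith)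
    have hxb : ‖x (k + 1)‖ ≤ R + 1 := (h1 (k + 1) le_rfl).trans (by linarith)
    have key := descent (x k) (x (k + 1)) hxa hxb
    have hsub : x (k + 1) - x k = -d := by rw [hxk1]; abel
    rw [hsub, inner_neg_right, norm_neg] at key
    have h10 : L * ‖d‖ ^ 2 ≤ (L + G + 1) * ‖d‖ ^ 2 := by nlinarith [sq_nonneg ‖d‖]
    linarith
  · have hc1 : chi x (k + 1) R = 0 := if_neg h1
    rw [hc1, mul_zero]
    by_cases h2 : ∀ j ≤ k, ‖x j‖ ≤ R
    · have hc2 : chi x k R = 1 := if_pos h2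
      rw [hc2, mul_one]
      have hxa : ‖x k‖ ≤ R + 1 := (h2 k le_rfl).trans (by linarith)
      have hFk : 0 ≤ F (x k) - F_lb := by linarith [hbd (x k)]
      have hgG : ‖g‖ ≤ G := by
        have h0B : ‖(0 : EuclideanSpace ℝ (Fin p))‖ ≤ R + 1 := by
          simp; linarith
        have h7 := hLip (x k) (by simpa [Metric.mem_closedBall, dist_eq_norm] using hxa)
          0 (by simpa [Metric.mem_closedBall, dist_eq_norm] using h0B)
        have htri : ‖g‖ ≤ ‖gradient F (x k) - gradient F 0‖ + ‖gradient F 0‖ := by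
          rw [hg]
          simpa using norm_add_le (gradient F (x k) - gradient F 0) (gradient F 0)
        have hxkR : ‖x k - 0‖ ≤ R := by simpa using h2 k le_rfl
        have h8 : ‖gradient F (x k) - gradient F 0‖ ≤ L * R := by
          calc ‖gradient F (x k) - gradient F 0‖ ≤ L * ‖x k - 0‖ := h7
            _ ≤ L * R := by nlinarith [norm_nonneg (x k - 0)]
        rw [hGdef]; linarith
      have hinner : inner ℝ g d ≤ ‖g‖ * ‖d‖ := real_inner_le_norm g d
      by_cases h3 : ‖d‖ ≤ 1
      · have hxb : ‖x (k + 1)‖ ≤ R + 1 := by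
          rw [hxk1]
          calc ‖x k - d‖ ≤ ‖x k‖ + ‖d‖ := norm_sub_le _ _
            _ ≤ R + 1 := by linarith [h2 k le_rfl]
        have key := descent (x k) (x (k + 1)) hxa hxb
        have hsub : x (k + 1) - x k = -d := by rw [hxk1]; abel
        rw [hsub, inner_neg_right, norm_neg] at key
        have hFk1 : F_lb ≤ F (x (k + 1)) := hbd _
        have h10 : L * ‖d‖ ^ 2 ≤ (L + G + 1) * ‖d‖ ^ 2 := by nlinarith [sq_nonneg ‖d‖]
        linarith
      · push_neg at h3
        have hd2 : ‖d‖ ≤ ‖d‖ ^ 2 := by nlinarith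
        have h9 : inner ℝ g d ≤ G * ‖d‖ ^ 2 := by
          calc (inner ℝ g d : ℝ) ≤ ‖g‖ * ‖d‖ := hinner
            _ ≤ G * ‖d‖ := mul_le_mul_of_nonneg_right hgG (norm_nonneg d)
            _ ≤ G * ‖d‖ ^ 2 := mul_le_mul_of_nonneg_left hd2 hG0
        have h10 : G * ‖d‖ ^ 2 ≤ (L + G + 1) * ‖d‖ ^ 2 := by nlinarith [sq_nonneg ‖d‖]
        linarith
    · have hc2 : chi x k R = 0 := if_neg h2
      rw [hc2, mul_zero]
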